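/- arXiv:2106.08084 — 2 statements merged into one kernel-verified Lean document; each statement's English description precedes it below -/
import Mathlib

section
/- Let d ≥ 1 and let μ be a Borel probability measure on X = [0,1]^d with μ = f·Leb for an integrable density f : ℝ^d → [0,∞). For even n ≥ 2 and x ∈ [0,1)^d let Q_n(x) := (2/n)·⌊(n/2)x⌋ + [0,2/n]^d (floor taken componentwise) denote the A-composite cell containing x, and c_n(x) := (2/n)·⌊(n/2)x⌋ + (1/n,…,1/n) its center. Then for μ-almost every x ∈ [0,1)^d and every continuous φ : [−1,1]^d → ℝ: (1/μ(Q_n(x))) · ∫_{Q_n(x)} φ(n(x' − c_n(x))) dμ(x') → 2^{−d} ∫_{[−1,1]^d} φ(z) dz as n → ∞ through even integers. In other words, the normalized restriction of μ to the composite cell containing x, rescaled to the reference cell Z = [−1,1]^d, converges weakly* to the uniform probability measure on Z. -/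
open MeasureTheory Set Filter
open scoped ENNReal

noncomputable section

abbrev E (d : ℕ) : Type := EuclideanSpace ℝ (Fin d)

/-- The cube `X = [0,1]^d`. -/
def Xcube (d : ℕ) : Set (E d) := {x | ∀ i, x i ∈ Icc (0:ℝ) 1}

/-- The reference cell `Z = [−1,1]^d`. -/
def Zcube (d : ℕ) : Set (E d) := {z | ∀ i, z i ∈ Icc (-1:ℝ) 1}

/-- The A-composite cell at scale `n = 2m` containing `x`:
`Q_n(x) = (2/n)⌊(n/2)x⌋ + [0,2/n]^d = (1/m)⌊m x⌋ + [0,1/m]^d` (floor componentwise). -/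
def Qcell (d m : ℕ) (x : E d) : Set (E d) :=
  {x' | ∀ i, (⌊(m:ℝ) * x i⌋ : ℝ) / m ≤ x' i ∧ x' i ≤ (⌊(m:ℝ) * x i⌋ : ℝ) / m + 1 / m}

namespace Stmt18Aux

open Metric

variable {d : ℕ}

/-- center of the cell -/
def ctr (d m : ℕ) (x : E d) : E d :=
  (WithLp.equiv 2 (∀ _ : Fin d, ℝ)).symm fun i => (⌊(m:ℝ) * x i⌋ : ℝ) / m + 1 / (2*m)

lemma Qcell_measurableSet (m : ℕ) (x : E d) : MeasurableSet (Qcell d m x) := by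
  have : Qcell d m x = ⋂ i, {x' : E d |
      x' i ∈ Icc ((⌊(m:ℝ) * x i⌋ : ℝ) / m) ((⌊(m:ℝ) * x i⌋ : ℝ) / m + 1/m)} := by
    ext x'; simp [Qcell, Icc, forall_and]
  rw [this]
  exact MeasurableSet.iInter fun i =>
    ((measurable_pi_apply i).comp (MeasurableEquiv.toLp 2 (Fin d → ℝ)).symm.measurable)
      measurableSet_Icc

lemma Zcube_measurableSet : MeasurableSet (Zcube d) := by
  have : Zcube d = ⋂ i, {z : E d | z i ∈ Icc (-1:ℝ) 1} := by ext z; simp [Zcube]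
  rw [this]
  exact MeasurableSet.iInter fun i =>
    ((measurable_pi_apply i).comp (MeasurableEquiv.toLp 2 (Fin d → ℝ)).symm.measurable)
      measurableSet_Icc

lemma volume_box (a : Fin d → ℝ) (r : ℝ) (hr : 0 ≤ r) :
    volume {x' : E d | ∀ i, a i ≤ x' i ∧ x' i ≤ a i + r} = ENNReal.ofReal (r ^ d) := by
  have h1 : {x' : E d | ∀ i, a i ≤ x' i ∧ x' i ≤ a i + r}
      = (MeasurableEquiv.toLp 2 (Fin d → ℝ)).symm ⁻¹'
        (Set.pi univ fun i => Icc (a i) (a i + r)) := by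
    ext x'; simp [Icc, Set.pi]
  rw [h1, (EuclideanSpace.volume_preserving_symm_measurableEquiv_toLp (Fin d)).measure_preimage
    (MeasurableSet.univ_pi fun i => measurableSet_Icc).nullMeasurableSet]
  rw [volume_pi_pi]
  simp [Real.volume_Icc, ← ENNReal.ofReal_pow hr]

lemma volume_Qcell (m : ℕ) (x : E d) :
    volume (Qcell d m x) = ENNReal.ofReal ((1/m : ℝ) ^ d) := by
  have := volume_box (d := d) (fun i => (⌊(m:ℝ) * x i⌋ : ℝ) / m) (1/m) (by positivity)
  rw [← this]; rfl

lemma floor_bounds (m : ℕ) (hm : 1 ≤ m) (t : ℝ) :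
    (⌊(m:ℝ) * t⌋ : ℝ) / m ≤ t ∧ t ≤ (⌊(m:ℝ) * t⌋ : ℝ) / m + 1/m := by
  have hm' : (0:ℝ) < m := by exact_mod_cast hm
  constructor
  · rw [div_le_iff₀ hm', mul_comm]; exact Int.floor_le _
  · rw [← add_div, le_div_iff₀ hm', mul_comm]
    exact (Int.lt_floor_add_one _).le

lemma Qcell_subset_closedBall (m : ℕ) (hm : 1 ≤ m) (x : E d) :
    Qcell d m x ⊆ closedBall x (Real.sqrt d / m) := by
  intro x' hx'
  have hm' : (0:ℝ) < m := by exact_mod_cast hm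
  rw [mem_closedBall, EuclideanSpace.dist_eq]
  have h1 : ∀ i, dist (x' i) (x i)^2 ≤ (1/m:ℝ)^2 := by
    intro i
    have h2 := hx' i
    obtain ⟨h3, h4⟩ := floor_bounds m hm (x i)
    have h5 : |x' i - x i| ≤ 1/m := by rw [abs_sub_le_iff]; constructor <;> nlinarith
    rw [Real.dist_eq]
    gcongr
  calc Real.sqrt (∑ i, dist (x' i) (x i)^2) ≤ Real.sqrt (∑ _i : Fin d, (1/m:ℝ)^2) := by
        apply Real.sqrt_le_sqrt; exact Finset.sum_le_sum fun i _ => h1 i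
    _ = Real.sqrt d / m := by
        rw [Finset.sum_const, Finset.card_univ, Fintype.card_fin, nsmul_eq_mul]
        rw [Real.sqrt_mul (by positivity), Real.sqrt_sq (by positivity), mul_one_div]

lemma Qcell_eq_preimage (m : ℕ) (hm : 1 ≤ m) (x : E d) :
    Qcell d m x = (fun x' => (2*m:ℝ) • (x' - ctr d m x)) ⁻¹' Zcube d := by
  have hm' : (0:ℝ) < m := by exact_mod_cast hm
  ext x'
  simp only [Qcell, Zcube, mem_setOf_eq, mem_preimage]
  refine forall_congr' fun i => ?_
  have hc : ((2*m:ℝ) • (x' - ctr d m x)) i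
      = (2*m:ℝ) * (x' i - ((⌊(m:ℝ) * x i⌋ : ℝ) / m + 1 / (2*m))) := rfl
  set a := (⌊(m:ℝ) * x i⌋ : ℝ) / m with ha
  have key : (2*m:ℝ) * (x' i - (a + 1 / (2*m))) = 2*m*(x' i - a) - 1 := by
    field_simp; ring
  rw [hc, mem_Icc, key]
  have h2m : (0:ℝ) < 2*m := by positivity
  have hinv : (2*m:ℝ) * (1/m) = 2 := by field_simp
  constructor
  · rintro ⟨h1, h2⟩
    have g1 : (0:ℝ) ≤ x' i - a := by linarith
    have g2 : x' i - a ≤ 1/m := by linarith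
    have g3 := mul_le_mul_of_nonneg_left g2 h2m.le
    have g4 := mul_nonneg h2m.le g1
    rw [hinv] at g3
    constructor <;> linarith
  · rintro ⟨h1, h2⟩
    have g3 : (2*m:ℝ)*(x' i - a) ≤ 2 := by linarith
    have g4 : (0:ℝ) ≤ 2*m*(x' i - a) := by linarith
    have g5 : x' i - a ≤ 1/m := by
      by_contra hcon
      push_neg at hcon
      have := mul_lt_mul_of_pos_left hcon h2m
      rw [hinv] at this; linarith
    have g6 : (0:ℝ) ≤ x' i - a := nonneg_of_mul_nonneg_right g4 h2m
    constructor <;> linarith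

lemma integral_comp_rescale (m : ℕ) (hm : 1 ≤ m) (x : E d) (φ : E d → ℝ) :
    ∫ x' in Qcell d m x, φ ((2*m:ℝ) • (x' - ctr d m x)) ∂volume
      = ((2*m:ℝ)^d)⁻¹ * ∫ z in Zcube d, φ z ∂volume := by
  have hm' : (0:ℝ) < m := by exact_mod_cast hm
  set ψ : E d → ℝ := (Zcube d).indicator φ with hψ
  have h1 : ∫ x' in Qcell d m x, φ ((2*m:ℝ) • (x' - ctr d m x)) ∂volume
      = ∫ x', ψ ((2*m:ℝ) • (x' - ctr d m x)) ∂volume := by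
    rw [← integral_indicator]
    · congr 1
      ext x'
      by_cases h : x' ∈ Qcell d m x
      · rw [indicator_of_mem h, hψ, indicator_of_mem]
        rw [Qcell_eq_preimage m hm x] at h; exact h
      · rw [indicator_of_notMem h, hψ, indicator_of_notMem]
        rw [Qcell_eq_preimage m hm x] at h; exact h
    · rw [Qcell_eq_preimage m hm x]
      exact Zcube_measurableSet.preimage (by fun_prop)
  have h2 : ∀ x' : E d, ((2*m:ℝ) • (x' - ctr d m x)) = (2*m:ℝ) • x' - (2*m:ℝ) • (ctr d m x) := by
    intro x'; rw [smul_sub]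
  rw [h1]
  simp_rw [h2]
  set v := (2*m:ℝ) • (ctr d m x) with hv
  have h3 : ∫ x', ψ ((2*m:ℝ) • x' - v) ∂volume
      = ∫ x', (fun y => ψ (y - v)) ((2*m:ℝ) • x') ∂volume := rfl
  rw [h3, MeasureTheory.Measure.integral_comp_smul volume (fun y => ψ (y - v)) (2*m:ℝ)]
  rw [integral_sub_right_eq_self ψ v]
  rw [hψ, integral_indicator Zcube_measurableSet]
  rw [finrank_euclideanSpace_fin, smul_eq_mul]
  congr 1
  rw [abs_of_nonneg (by positivity)]

lemma Zcube_isCompact : IsCompact (Zcube d) := by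
  apply Metric.isCompact_of_isClosed_isBounded
  · have : Zcube d = ⋂ i, (fun z : E d => z i) ⁻¹' (Icc (-1:ℝ) 1) := by ext z; simp [Zcube]
    rw [this]
    exact isClosed_iInter fun i => isClosed_Icc.preimage
      ((continuous_apply i).comp (EuclideanSpace.equiv (Fin d) ℝ).continuous)
  · apply Bornology.IsBounded.subset
      (Metric.isBounded_closedBall (x := (0 : E d)) (r := Real.sqrt d))
    intro z hz
    rw [mem_closedBall, dist_zero_right, EuclideanSpace.norm_eq]
    have h1 : ∀ i, ‖z i‖^2 ≤ (1:ℝ) := by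
      intro i
      obtain ⟨h2, h3⟩ := hz i
      rw [Real.norm_eq_abs, sq_abs]
      nlinarith
    calc Real.sqrt (∑ i, ‖z i‖^2) ≤ Real.sqrt (∑ _i : Fin d, (1:ℝ)) := by
          apply Real.sqrt_le_sqrt; exact Finset.sum_le_sum fun i _ => h1 i
      _ = Real.sqrt d := by
          rw [Finset.sum_const, Finset.card_univ, Fintype.card_fin, nsmul_eq_mul, mul_one]

lemma Zcube_bound (φ : E d → ℝ) (hφ : Continuous φ) :
    ∃ C, 0 ≤ C ∧ ∀ z ∈ Zcube d, |φ z| ≤ C := by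
  obtain ⟨C, hC⟩ := (Zcube_isCompact (d := d)).exists_bound_of_continuousOn hφ.continuousOn
  exact ⟨max C 0, le_max_right _ _, fun z hz => (hC z hz).trans (le_max_left _ _)⟩

end Stmt18Aux

open Stmt18Aux Metric

/-- regularity of the undiscretized marginal scheme.  For `μ = f·Leb` a
probability measure on `X = [0,1]^d`, for `μ`-a.e. `x ∈ [0,1)^d` and every continuous `φ`,
the normalized restriction of `μ` to the composite cell containing `x`, rescaled (by
`x' ↦ n(x'−c_n(x))`, `n = 2m`) to the reference cell `Z = [−1,1]^d`, converges weakly* to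
the uniform probability measure `2^{−d}·Leb ↾ Z`. -/
theorem stmt18 (d : ℕ) (hd : 1 ≤ d) (f : E d → ℝ) (hfi : Integrable f volume)
    (hf0 : ∀ x, 0 ≤ f x)
    (μ : Measure (E d)) (hμ : μ = volume.withDensity fun x => ENNReal.ofReal (f x))
    (hμP : IsProbabilityMeasure μ) (hμX : μ (Xcube d)ᶜ = 0) :
    ∀ᵐ x ∂μ, (∀ i, x i ∈ Ico (0:ℝ) 1) →
      ∀ φ : E d → ℝ, Continuous φ →
        Tendsto (fun m : ℕ =>
            (1 / (μ (Qcell d m x)).toReal) *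
              ∫ x' in Qcell d m x,
                φ ((WithLp.equiv 2 (∀ _ : Fin d, ℝ)).symm
                  fun i => (2*m : ℝ) * (x' i - ((⌊(m:ℝ) * x i⌋ : ℝ) / m + 1 / (2*m)))) ∂μ)
          atTop
          (nhds ((1 / 2^d) * ∫ z in Zcube d, φ z)) := by
  have hac : μ ≪ volume := by
    rw [hμ]; exact withDensity_absolutelyContinuous _ _
  -- Lebesgue differentiation along centered balls
  have h_leb : ∀ᵐ x ∂(volume : Measure (E d)), ∀ (w : ℕ → E d) (δ : ℕ → ℝ),
      Tendsto δ atTop (nhdsWithin 0 (Ioi 0)) →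
      (∀ᶠ j in atTop, x ∈ closedBall (w j) (1 * δ j)) →
      Tendsto (fun j => ⨍ y in closedBall (w j) (δ j), ‖f y - f x‖ ∂volume) atTop (nhds 0) := by
    filter_upwards [IsUnifLocDoublingMeasure.ae_tendsto_average_norm_sub
      (μ := (volume : Measure (E d))) hfi.locallyIntegrable 1] with x hx
    exact fun w δ h1 h2 => hx w δ h1 h2
  have h_leb' := hac.ae_le h_leb
  -- positivity of the density μ-a.e.
  have hfpos : ∀ᵐ x ∂μ, 0 < f x := by
    set g := hfi.aemeasurable.mk f with hg
    have hgm : Measurable g := hfi.aemeasurable.measurable_mk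
    have hfg : f =ᵐ[volume] g := hfi.aemeasurable.ae_eq_mk
    have hμg : μ = volume.withDensity fun x => ENNReal.ofReal (g x) := by
      rw [hμ]
      exact withDensity_congr_ae (hfg.mono fun x hx => by simp only []; rw [hx])
    have hs : MeasurableSet {x : E d | g x ≤ 0} := measurableSet_le hgm measurable_const
    have h0 : μ {x : E d | g x ≤ 0} = 0 := by
      rw [hμg, withDensity_apply _ hs]
      rw [setLIntegral_congr_fun hs (fun y hy =>
        (ENNReal.ofReal_eq_zero.2 hy : ENNReal.ofReal (g y) = 0))]
      simp
    have h1 : ∀ᵐ x ∂μ, 0 < g x := by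
      rw [ae_iff]
      convert h0 using 2
      ext x; simp
    have h2 : ∀ᵐ x ∂μ, f x = g x := hac.ae_le hfg
    filter_upwards [h1, h2] with x hx1 hx2
    rw [hx2]; exact hx1
  filter_upwards [h_leb', hfpos] with x hx hfx
  intro hxIco φ hφ
  -- radii of enclosing balls
  have hd' : (0:ℝ) < Real.sqrt d := Real.sqrt_pos.2 (by exact_mod_cast hd)
  set δ : ℕ → ℝ := fun m => Real.sqrt d / m with hδdef
  have hδ : Tendsto δ atTop (nhdsWithin 0 (Ioi 0)) := by
    rw [tendsto_nhdsWithin_iff]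
    constructor
    · exact tendsto_const_div_atTop_nhds_zero_nat _
    · filter_upwards [eventually_ge_atTop 1] with m hm
      have hm' : (0:ℝ) < m := by exact_mod_cast hm
      exact div_pos hd' hm'
  have hmem : ∀ᶠ m in atTop, x ∈ closedBall x (1 * δ m) := by
    filter_upwards [eventually_ge_atTop 1] with m hm
    have hm' : (0:ℝ) < m := by exact_mod_cast hm
    rw [mem_closedBall, dist_self, one_mul]
    positivity
  have havg := hx (fun _ => x) δ hδ hmem
  -- basic quantities
  set V : ℕ → ℝ := fun m => (1/m:ℝ)^d with hVdef
  set A : ℕ → ℝ := fun m => ∫ y in Qcell d m x, |f y - f x| ∂volume with hAdef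
  set D : ℕ → ℝ := fun m => ∫ y in Qcell d m x, f y ∂volume with hDdef
  set B : ℝ := (volume (ball (0: E d) 1)).toReal with hBdef
  have hVpos : ∀ m : ℕ, 1 ≤ m → 0 < V m := by
    intro m hm
    have hm' : (0:ℝ) < m := by exact_mod_cast hm
    positivity
  have hAnn : ∀ m : ℕ, 0 ≤ A m := fun m =>
    setIntegral_nonneg (Qcell_measurableSet m x) fun y _ => abs_nonneg _
  have hQvol : ∀ m : ℕ, volume (Qcell d m x) = ENNReal.ofReal ((1/m:ℝ)^d) :=
    fun m => volume_Qcell m x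
  have hQfin : ∀ m : ℕ, volume (Qcell d m x) < ⊤ := by
    intro m; rw [hQvol m]; exact ENNReal.ofReal_lt_top
  have hfsubQ : ∀ m : ℕ, IntegrableOn (fun y => f y - f x) (Qcell d m x) volume :=
    fun m => hfi.integrableOn.sub (integrableOn_const (hQfin m).ne)
  -- A m is controlled by the ball average
  have hAle : ∀ m : ℕ, 1 ≤ m →
      A m ≤ (Real.sqrt d)^d * B * (⨍ y in closedBall x (δ m), ‖f y - f x‖ ∂volume) * V m := by
    intro m hm
    have hm' : (0:ℝ) < m := by exact_mod_cast hm
    have hδpos : 0 < δ m := div_pos hd' hm'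
    have hInt : IntegrableOn (fun y => |f y - f x|) (closedBall x (δ m)) volume :=
      (hfi.integrableOn.sub (integrableOn_const measure_closedBall_lt_top.ne)).abs
    have step1 : A m ≤ ∫ y in closedBall x (δ m), |f y - f x| ∂volume := by
      apply setIntegral_mono_set hInt
        (Eventually.of_forall fun y => abs_nonneg _)
        (HasSubset.Subset.eventuallyLE (Qcell_subset_closedBall m hm x))
    have hvcb : volume (closedBall x (δ m)) = ENNReal.ofReal ((δ m)^d) * volume (ball (0:E d) 1) := by
      have := Measure.addHaar_closedBall (volume : Measure (E d)) x hδpos.le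
      rwa [finrank_euclideanSpace_fin] at this
    have hvcbR : (volume (closedBall x (δ m))).toReal = (δ m)^d * B := by
      rw [hvcb, ENNReal.toReal_mul, ENNReal.toReal_ofReal (by positivity)]
    have hvcbpos : 0 < (volume (closedBall x (δ m))).toReal := by
      apply ENNReal.toReal_pos
      · exact (measure_closedBall_pos volume x hδpos).ne'
      · exact (measure_closedBall_lt_top).ne
    have step2 : ∫ y in closedBall x (δ m), |f y - f x| ∂volume
        = (volume (closedBall x (δ m))).toReal
          * ⨍ y in closedBall x (δ m), ‖f y - f x‖ ∂volume := by
      rw [setAverage_eq, smul_eq_mul, measureReal_def, ← mul_assoc, mul_inv_cancel₀ hvcbpos.ne', one_mul]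
      simp_rw [Real.norm_eq_abs]
    have hδd : (δ m)^d = (Real.sqrt d)^d * V m := by
      rw [hVdef]
      simp only []
      rw [← mul_pow, mul_one_div, hδdef]
    calc A m ≤ ∫ y in closedBall x (δ m), |f y - f x| ∂volume := step1
      _ = (volume (closedBall x (δ m))).toReal
            * ⨍ y in closedBall x (δ m), ‖f y - f x‖ ∂volume := step2
      _ = (Real.sqrt d)^d * B * (⨍ y in closedBall x (δ m), ‖f y - f x‖ ∂volume) * V m := by
          rw [hvcbR, hδd]; ring
  -- A m / V m tends to 0
  have hKavg : Tendsto (fun m => (Real.sqrt d)^d * B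
      * (⨍ y in closedBall x (δ m), ‖f y - f x‖ ∂volume)) atTop (nhds 0) := by
    have := havg.const_mul ((Real.sqrt d)^d * B)
    simpa using this
  have hAV : Tendsto (fun m => A m / V m) atTop (nhds 0) := by
    apply squeeze_zero' ?_ ?_ hKavg
    · filter_upwards [eventually_ge_atTop 1] with m hm
      exact div_nonneg (hAnn m) (hVpos m hm).le
    · filter_upwards [eventually_ge_atTop 1] with m hm
      rw [div_le_iff₀ (hVpos m hm)]
      exact hAle m hm
  -- D m / V m tends to f x
  have hconstQ : ∀ m : ℕ, ∫ _y in Qcell d m x, f x ∂volume = V m * f x := by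
    intro m
    rw [setIntegral_const, measureReal_def, hQvol m, smul_eq_mul,
      ENNReal.toReal_ofReal (by positivity)]
  have hDkey : ∀ m : ℕ, 1 ≤ m → |D m / V m - f x| ≤ A m / V m := by
    intro m hm
    have hVm := hVpos m hm
    have hsub : D m - V m * f x = ∫ y in Qcell d m x, (f y - f x) ∂volume := by
      rw [integral_sub hfi.integrableOn (integrableOn_const (hQfin m).ne), ← hconstQ m]
    have habs : |D m - V m * f x| ≤ A m := by
      rw [hsub]
      calc |∫ y in Qcell d m x, (f y - f x) ∂volume|
          ≤ ∫ y in Qcell d m x, |f y - f x| ∂volume := by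
            simpa [Real.norm_eq_abs] using
              norm_integral_le_integral_norm (μ := volume.restrict (Qcell d m x))
                (fun y => f y - f x)
        _ = A m := rfl
    have heq2 : D m / V m - f x = (D m - V m * f x) / V m := by field_simp
    rw [heq2, abs_div, abs_of_pos hVm]
    gcongr
  have hDV : Tendsto (fun m => D m / V m) atTop (nhds (f x)) := by
    rw [← tendsto_sub_nhds_zero_iff]
    apply squeeze_zero_norm' ?_ hAV
    filter_upwards [eventually_ge_atTop 1] with m hm
    simpa [Real.norm_eq_abs] using hDkey m hm
  -- bound for φ on the reference cell
  obtain ⟨C, hC0, hCb⟩ := Zcube_bound φ hφ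
  -- error term
  set Err : ℕ → ℝ := fun m =>
    ∫ y in Qcell d m x, φ ((2*m:ℝ) • (y - ctr d m x)) * (f y - f x) ∂volume with hErrdef
  have hSmeas : ∀ m : ℕ, Continuous fun y : E d => φ ((2*m:ℝ) • (y - ctr d m x)) := by
    intro m; exact hφ.comp (by fun_prop)
  have hφQ : ∀ m : ℕ, 1 ≤ m → ∀ y ∈ Qcell d m x, |φ ((2*m:ℝ) • (y - ctr d m x))| ≤ C := by
    intro m hm y hy
    apply hCb
    rw [Qcell_eq_preimage m hm x] at hy
    exact hy
  have hI1 : ∀ m : ℕ, 1 ≤ m →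
      IntegrableOn (fun y => φ ((2*m:ℝ) • (y - ctr d m x)) * (f y - f x)) (Qcell d m x) volume := by
    intro m hm
    apply Integrable.bdd_mul (hfsubQ m) ((hSmeas m).aestronglyMeasurable.restrict)
    rw [ae_restrict_iff' (Qcell_measurableSet m x)]
    exact Eventually.of_forall fun y hy => by
      simpa [Real.norm_eq_abs] using hφQ m hm y hy
  have hI2 : ∀ m : ℕ, 1 ≤ m →
      IntegrableOn (fun y => φ ((2*m:ℝ) • (y - ctr d m x))) (Qcell d m x) volume := by
    intro m hm
    have := Integrable.bdd_mul (c := C) (f := fun y : E d => φ ((2*m:ℝ) • (y - ctr d m x)))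
      (integrableOn_const (hQfin m).ne : IntegrableOn (fun _ => (1:ℝ)) _ _)
      ((hSmeas m).aestronglyMeasurable.restrict) ?_
    · simpa [IntegrableOn] using this
    · rw [ae_restrict_iff' (Qcell_measurableSet m x)]
      exact Eventually.of_forall fun y hy => by
        simpa [Real.norm_eq_abs] using hφQ m hm y hy
  have hErrle : ∀ m : ℕ, 1 ≤ m → |Err m| ≤ C * A m := by
    intro m hm
    have habsInt : IntegrableOn (fun y => |φ ((2*m:ℝ) • (y - ctr d m x))| * |f y - f x|)
        (Qcell d m x) volume := by
      simpa [IntegrableOn, abs_mul] using (hI1 m hm).abs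
    have step1 : |Err m| ≤ ∫ y in Qcell d m x,
        |φ ((2*m:ℝ) • (y - ctr d m x))| * |f y - f x| ∂volume := by
      simpa [Real.norm_eq_abs, abs_mul] using
        norm_integral_le_integral_norm (μ := volume.restrict (Qcell d m x))
          (fun y => φ ((2*m:ℝ) • (y - ctr d m x)) * (f y - f x))
    have step2 : ∫ y in Qcell d m x,
        |φ ((2*m:ℝ) • (y - ctr d m x))| * |f y - f x| ∂volume
        ≤ ∫ y in Qcell d m x, C * |f y - f x| ∂volume := by
      apply setIntegral_mono_on habsInt (((hfsubQ m).abs.const_mul C))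
        (Qcell_measurableSet m x)
      intro y hy
      exact mul_le_mul_of_nonneg_right (hφQ m hm y hy) (abs_nonneg _)
    have step3 : ∫ y in Qcell d m x, C * |f y - f x| ∂volume = C * A m := by
      rw [hAdef]; exact integral_const_mul C _
    linarith
  have hErrV : Tendsto (fun m => Err m / V m) atTop (nhds 0) := by
    apply squeeze_zero_norm' ?_ (by simpa using hAV.const_mul C)
    filter_upwards [eventually_ge_atTop 1] with m hm
    rw [Real.norm_eq_abs, abs_div, abs_of_pos (hVpos m hm), div_le_iff₀ (hVpos m hm)]
    calc |Err m| ≤ C * A m := hErrle m hm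
      _ = C * (A m / V m) * V m := by field_simp [(hVpos m hm).ne']
  -- value of the measure of the cell
  have hQtoReal : ∀ m : ℕ, (μ (Qcell d m x)).toReal = D m := by
    intro m
    have h1 : μ (Qcell d m x) = ∫⁻ y in Qcell d m x, ENNReal.ofReal (f y) ∂volume := by
      rw [hμ, withDensity_apply _ (Qcell_measurableSet m x)]
    have h2 : ENNReal.ofReal (D m) = ∫⁻ y in Qcell d m x, ENNReal.ofReal (f y) ∂volume :=
      ofReal_integral_eq_lintegral_ofReal hfi.integrableOn
        (Eventually.of_forall fun y => hf0 y)
    rw [h1, ← h2, ENNReal.toReal_ofReal]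
    exact setIntegral_nonneg (Qcell_measurableSet m x) fun y _ => hf0 y
  set I : ℝ := ∫ z in Zcube d, φ z with hIdef
  -- numerator identity
  have hnum : ∀ m : ℕ, 1 ≤ m →
      ∫ x' in Qcell d m x, φ ((2*m:ℝ) • (x' - ctr d m x)) ∂μ
        = Err m + f x * (((2*m:ℝ)^d)⁻¹ * I) := by
    intro m hm
    have e1 : ∫ x' in Qcell d m x, φ ((2*m:ℝ) • (x' - ctr d m x)) ∂μ
        = ∫ x' in Qcell d m x,
            (Real.toNNReal (f x')) • φ ((2*m:ℝ) • (x' - ctr d m x)) ∂volume := by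
      rw [hμ]
      exact setIntegral_withDensity_eq_setIntegral_smul₀
        ((measurable_real_toNNReal.comp_aemeasurable (hfi.aemeasurable.restrict)))
        _ (Qcell_measurableSet m x)
    have e2 : ∀ x' : E d, (Real.toNNReal (f x')) • φ ((2*m:ℝ) • (x' - ctr d m x))
        = φ ((2*m:ℝ) • (x' - ctr d m x)) * (f x' - f x)
          + f x * φ ((2*m:ℝ) • (x' - ctr d m x)) := by
      intro x'
      rw [NNReal.smul_def, smul_eq_mul, Real.coe_toNNReal _ (hf0 x')]
      ring
    rw [e1]
    simp_rw [e2]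
    rw [integral_add (hI1 m hm) ((hI2 m hm).const_mul (f x)), integral_const_mul,
      integral_comp_rescale m hm x φ]
  -- eventual positivity of D
  have hDpos : ∀ᶠ m in atTop, 0 < D m := by
    have h1 : ∀ᶠ m in atTop, f x / 2 < D m / V m :=
      hDV.eventually (eventually_gt_nhds (by linarith))
    filter_upwards [h1, eventually_ge_atTop 1] with m hm1 hm2
    have hVm := hVpos m hm2
    have : 0 < D m / V m := lt_trans (by positivity) hm1
    calc (0:ℝ) = 0 * V m := by ring
      _ < (D m / V m) * V m := by exact mul_lt_mul_of_pos_right this hVm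
      _ = D m := by field_simp
  -- final combination
  have hfinal : Tendsto (fun m => (Err m / V m + f x * ((1/2^d : ℝ) * I)) / (D m / V m)) atTop
      (nhds ((1/2^d : ℝ) * I)) := by
    have h1 : Tendsto (fun m => Err m / V m + f x * ((1/2^d:ℝ) * I)) atTop
        (nhds (0 + f x * ((1/2^d:ℝ) * I))) := hErrV.add_const _
    have h2 := h1.div hDV hfx.ne'
    have h3 : (0 + f x * ((1/2^d:ℝ) * I)) / f x = (1/2^d : ℝ) * I := by
      field_simp
      ring
    rwa [h3] at h2
  apply hfinal.congr'
  filter_upwards [hDpos, eventually_ge_atTop 1] with m hDm hm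
  have hm' : (0:ℝ) < m := by exact_mod_cast hm
  have hVm := hVpos m hm
  have heq : (∫ x' in Qcell d m x,
      φ ((WithLp.equiv 2 (∀ _ : Fin d, ℝ)).symm
        fun i => (2*m : ℝ) * (x' i - ((⌊(m:ℝ) * x i⌋ : ℝ) / m + 1 / (2*m)))) ∂μ)
      = ∫ x' in Qcell d m x, φ ((2*m:ℝ) • (x' - ctr d m x)) ∂μ := rfl
  rw [heq, hQtoReal m, hnum m hm]
  have h2md : ((2*m:ℝ)^d) = 2^d * m^d := by rw [mul_pow]
  have hVm' : V m = ((m:ℝ)^d)⁻¹ := by rw [hVdef]; simp [one_div, inv_pow]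
  field_simp [hVm', h2md]
  have hVm1 : V m * (m:ℝ)^d = 1 := by rw [hVm']; field_simp
  linear_combination (f x * I * 2^d) * hVm1
end
end

section
/- Let X = [0,1]^d, let Y ⊂ ℝ^d be compact, let π be a Borel probability measure on X×Y with first marginal μ, and let {X_J}_{J∈F} be a finite Borel partition of X with diam(X_J) ≤ δ for every J ∈ F. Define π̄ := Σ_{J ∈ F, μ(X_J) > 0} (μ ↾ X_J) ⊗ (P_Y(π ↾ (X_J×Y)) / μ(X_J)). Then π̄ is a probability measure on X×Y with the same two marginals as π, and W_{X×Y}(π̄, π) ≤ δ, where X×Y ⊂ ℝ^{2d} carries the Euclidean distance. In particular, averaging a coupling over the composite cells at scale n (cells of diameter 2√d/n) changes it by at most 2√d/n in Wasserstein-1 distance. -/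
open MeasureTheory Set Filter
open scoped ENNReal Classical

noncomputable section

/-- Optimal-transport cost with cost function `c`. -/
noncomputable def OTC {A B : Type*} [MeasurableSpace A] [MeasurableSpace B]
    (c : A → B → ℝ≥0∞) (α : Measure A) (β : Measure B) : ℝ≥0∞ :=
  ⨅ (γ : Measure (A × B)) (_ : γ.map Prod.fst = α) (_ : γ.map Prod.snd = β),
    ∫⁻ p, c p.1 p.2 ∂γ

/-- Euclidean distance on `ℝ^d × ℝ^d = ℝ^{2d}`. -/
noncomputable def edistE2 {d₁ d₂ : ℕ} (p q : E d₁ × E d₂) : ℝ≥0∞ :=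
  ENNReal.ofReal (Real.sqrt (dist p.1 q.1 ^ 2 + dist p.2 q.2 ^ 2))

/-- Product of two measures. -/
noncomputable def prodM {A B : Type*} [MeasurableSpace A] [MeasurableSpace B]
    (α : Measure A) (β : Measure B) : Measure (A × B) :=
  α.bind fun a => β.map (Prod.mk a)

/-- Cell average of a coupling over a finite partition:
`π̄ = Σ_J (μ ↾ X_J) ⊗ (P_Y(π ↾ X_J×Y)/μ(X_J))` (terms with `μ(X_J) = 0` vanish). -/
noncomputable def avgF (d : ℕ) (μ : Measure (E d)) (F : Finset (Set (E d)))
    (π : Measure (E d × E d)) : Measure (E d × E d) :=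
  ∑ J ∈ F, prodM (μ.restrict J) ((μ J)⁻¹ • (π.restrict (J ×ˢ univ)).map Prod.snd)

lemma measurable_mk_kernel {A B : Type*} [MeasurableSpace A] [MeasurableSpace B]
    (β : Measure B) [SFinite β] : Measurable fun a : A => β.map (Prod.mk a) := by
  apply Measure.measurable_of_measurable_coe
  intro t ht
  simp_rw [Measure.map_apply measurable_prodMk_left ht]
  exact measurable_measure_prodMk_left ht

lemma prodM_eq_prod {A B : Type*} [MeasurableSpace A] [MeasurableSpace B]
    (α : Measure A) (β : Measure B) [SFinite β] : prodM α β = α.prod β := by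
  ext s hs
  rw [prodM, Measure.bind_apply hs (measurable_mk_kernel β).aemeasurable, Measure.prod_apply hs]
  simp_rw [Measure.map_apply measurable_prodMk_left hs]

lemma prod_smul_right {A B : Type*} [MeasurableSpace A] [MeasurableSpace B]
    (α : Measure A) (β : Measure B) [SFinite β] (c : ℝ≥0∞) :
    α.prod (c • β) = c • α.prod β := by
  ext s hs
  rw [Measure.prod_apply hs, Measure.smul_apply, Measure.prod_apply hs, smul_eq_mul,
    ← lintegral_const_mul c (measurable_measure_prodMk_left hs)]
  simp [Measure.smul_apply]

lemma map_finset_sum_measure {A B ι : Type*} [MeasurableSpace A] [MeasurableSpace B]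
    (F : Finset ι) (m : ι → Measure A) {f : A → B} (hf : Measurable f) :
    (∑ J ∈ F, m J).map f = ∑ J ∈ F, (m J).map f := by
  ext s hs
  rw [Measure.map_apply hf hs, Measure.finset_sum_apply, Measure.finset_sum_apply]
  simp_rw [Measure.map_apply hf hs]

lemma isBounded_Xcube (d : ℕ) : Bornology.IsBounded (Xcube d) := by
  apply Bornology.IsBounded.subset (Metric.isBounded_closedBall (x := (0 : E d))
    (r := Real.sqrt d))
  intro x hx
  rw [Metric.mem_closedBall, dist_zero_right, EuclideanSpace.norm_eq]
  apply Real.sqrt_le_sqrt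
  calc ∑ i, ‖x i‖ ^ 2 ≤ ∑ _i : Fin d, 1 := by
        apply Finset.sum_le_sum
        intro i _
        have := hx i
        have h1 : |x i| ≤ 1 := abs_le.2 ⟨by linarith [this.1], this.2⟩
        calc ‖x i‖ ^ 2 = |x i| ^ 2 := by rw [Real.norm_eq_abs]
          _ ≤ 1 ^ 2 := pow_le_pow_left₀ (abs_nonneg _) h1 2
          _ = 1 := one_pow 2
    _ = (d : ℝ) := by simp

lemma sum_restrict_eq {A ι : Type*} [MeasurableSpace A] (m : Measure A) (F : Finset ι)
    (f : ι → Set A) (hm : ∀ J ∈ F, MeasurableSet (f J))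
    (hd : (↑F : Set ι).PairwiseDisjoint f)
    (hnull : m (⋃ J ∈ F, f J)ᶜ = 0) : ∑ J ∈ F, m.restrict (f J) = m := by
  have hU : MeasurableSet (⋃ J ∈ F, f J) :=
    MeasurableSet.biUnion F.countable_toSet hm
  ext s hs
  rw [Measure.finset_sum_apply]
  simp_rw [Measure.restrict_apply hs]
  rw [← measure_biUnion_finset (fun a ha b hb hab =>
    (hd ha hb hab).mono inter_subset_right inter_subset_right)
    fun J hJ => hs.inter (hm J hJ)]
  have h1 : (⋃ J ∈ F, s ∩ f J) = s ∩ ⋃ J ∈ F, f J :=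
    (inter_iUnion₂ s fun J _ => f J).symm
  rw [h1]
  have hdiff : m (s \ ⋃ J ∈ F, f J) = 0 :=
    measure_mono_null (fun x hx => hx.2) hnull
  rw [← measure_inter_add_diff s hU, hdiff, add_zero]

/-- averaging a coupling over a partition of `X` into cells of diameter at
most `δ` preserves both marginals and moves it by at most `δ` in the Wasserstein-1
distance on `X×Y` (Euclidean distance on `ℝ^{2d}`). -/
theorem stmt19 (d : ℕ) (Y : Set (E d)) (hY : IsCompact Y)
    (π : Measure (E d × E d)) [IsProbabilityMeasure π]
    (μ : Measure (E d)) (hμ : π.map Prod.fst = μ)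
    (hπs : π (Xcube d ×ˢ Y)ᶜ = 0)
    (F : Finset (Set (E d))) (hFm : ∀ J ∈ F, MeasurableSet J)
    (hFd : ∀ J ∈ F, ∀ J' ∈ F, J ≠ J' → Disjoint J J')
    (hFc : ⋃₀ ↑F = Xcube d)
    (δ : ℝ) (hδ : 0 ≤ δ) (hdiam : ∀ J ∈ F, Metric.diam J ≤ δ) :
    IsProbabilityMeasure (avgF d μ F π) ∧
    (avgF d μ F π).map Prod.fst = π.map Prod.fst ∧
    (avgF d μ F π).map Prod.snd = π.map Prod.snd ∧
    OTC edistE2 (avgF d μ F π) π ≤ ENNReal.ofReal δ := by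
  classical
  have hμprob : IsProbabilityMeasure μ :=
    hμ ▸ Measure.isProbabilityMeasure_map measurable_fst.aemeasurable
  have hμJ : ∀ J : Set (E d), MeasurableSet J → μ J = π (Prod.fst ⁻¹' J) := fun J hJ => by
    rw [← hμ, Measure.map_apply measurable_fst hJ]
  -- rewrite `avgF` in preimage form
  have havg : avgF d μ F π = ∑ J ∈ F,
      prodM (μ.restrict J) ((μ J)⁻¹ • (π.restrict (Prod.fst ⁻¹' J)).map Prod.snd) := by
    unfold avgF
    simp_rw [prod_univ]
  have hνuniv : ∀ J : Set (E d), MeasurableSet J →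
      (π.restrict (Prod.fst ⁻¹' J)).map Prod.snd univ = μ J := by
    intro J hJ
    rw [Measure.map_apply measurable_snd MeasurableSet.univ, preimage_univ,
      Measure.restrict_apply_univ, hμJ J hJ]
  -- union facts
  have hUeq : (⋃ J ∈ F, J) = Xcube d := by
    rw [← hFc, sUnion_eq_biUnion]
    rfl
  have hXnull : μ (Xcube d)ᶜ = 0 := by
    have hXm : MeasurableSet (Xcube d) := by
      rw [← hUeq]; exact MeasurableSet.biUnion F.countable_toSet hFm
    rw [hμJ _ hXm.compl]
    refine measure_mono_null ?_ hπs
    intro p hp hmem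
    exact hp hmem.1
  have hπXnull : π (Prod.fst ⁻¹' Xcube d)ᶜ = 0 := by
    refine measure_mono_null ?_ hπs
    intro p hp hmem
    exact hp hmem.1
  have hsumμ : ∑ J ∈ F, μ.restrict J = μ := by
    refine sum_restrict_eq μ F _ hFm (fun a ha b hb hab => hFd a ha b hb hab) ?_
    rw [hUeq]; exact hXnull
  have hsumπ : ∑ J ∈ F, π.restrict (Prod.fst ⁻¹' J) = π := by
    refine sum_restrict_eq π F _ (fun J hJ => measurable_fst (hFm J hJ))
      (fun a ha b hb hab => Disjoint.preimage _ (hFd a ha b hb hab)) ?_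
    rw [← preimage_iUnion₂, hUeq]; exact hπXnull
  have hsumμJ : ∑ J ∈ F, μ J = 1 := by
    have := congrArg (fun m : Measure (E d) => m univ) hsumμ
    simpa [Measure.finset_sum_apply, Measure.restrict_apply_univ] using this
  -- per-cell marginal computations for avgF
  have hTfst : ∀ J ∈ F, (prodM (μ.restrict J)
      ((μ J)⁻¹ • (π.restrict (Prod.fst ⁻¹' J)).map Prod.snd)).map Prod.fst
      = μ.restrict J := by
    intro J hJ
    haveI : IsFiniteMeasure ((π.restrict (Prod.fst ⁻¹' J)).map Prod.snd) :=
      Measure.isFiniteMeasure_map _ _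
    rw [prodM_eq_prod, Measure.map_fst_prod]
    rcases eq_or_ne (μ J) 0 with h0 | h0
    · rw [Measure.restrict_eq_zero.2 h0, smul_zero]
    · rw [Measure.smul_apply, hνuniv J (hFm J hJ), smul_eq_mul,
        ENNReal.inv_mul_cancel h0 (measure_ne_top μ J), one_smul]
  have hTsnd : ∀ J ∈ F, (prodM (μ.restrict J)
      ((μ J)⁻¹ • (π.restrict (Prod.fst ⁻¹' J)).map Prod.snd)).map Prod.snd
      = (π.restrict (Prod.fst ⁻¹' J)).map Prod.snd := by
    intro J hJ
    haveI : IsFiniteMeasure ((π.restrict (Prod.fst ⁻¹' J)).map Prod.snd) :=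
      Measure.isFiniteMeasure_map _ _
    rw [prodM_eq_prod, Measure.map_snd_prod, Measure.restrict_apply_univ, smul_smul]
    rcases eq_or_ne (μ J) 0 with h0 | h0
    · have hz : (π.restrict (Prod.fst ⁻¹' J)).map Prod.snd = 0 := by
        apply Measure.measure_univ_eq_zero.1
        rw [hνuniv J (hFm J hJ), h0]
      rw [hz, smul_zero]
    · rw [ENNReal.mul_inv_cancel h0 (measure_ne_top μ J), one_smul]
  -- marginals of avgF
  have havgfst : (avgF d μ F π).map Prod.fst = μ := by
    rw [havg, map_finset_sum_measure F _ measurable_fst, Finset.sum_congr rfl hTfst, hsumμ]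
  have havgsnd : (avgF d μ F π).map Prod.snd = π.map Prod.snd := by
    rw [havg, map_finset_sum_measure F _ measurable_snd, Finset.sum_congr rfl hTsnd,
      ← map_finset_sum_measure F _ measurable_snd, hsumπ]
  have havgprob : IsProbabilityMeasure (avgF d μ F π) := by
    constructor
    have := congrArg (fun m : Measure (E d) => m univ) havgfst
    simpa [Measure.map_apply measurable_fst MeasurableSet.univ] using this
  refine ⟨havgprob, by rw [havgfst, hμ], havgsnd, ?_⟩
  -- the coupling
  set g : E d × (E d × E d) → (E d × E d) × (E d × E d) :=
    fun p => ((p.1, p.2.2), p.2) with hg_def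
  have hg : Measurable g :=
    (measurable_fst.prodMk measurable_snd.snd).prodMk measurable_snd
  set γ : Measure ((E d × E d) × (E d × E d)) :=
    ∑ J ∈ F, (μ J)⁻¹ • (((μ.restrict J).prod (π.restrict (Prod.fst ⁻¹' J))).map g) with hγ_def
  have hγ1 : γ.map Prod.fst = avgF d μ F π := by
    rw [hγ_def, map_finset_sum_measure F _ measurable_fst, havg]
    refine Finset.sum_congr rfl fun J hJ => ?_
    haveI : IsFiniteMeasure ((π.restrict (Prod.fst ⁻¹' J)).map Prod.snd) :=
      Measure.isFiniteMeasure_map _ _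
    rw [Measure.map_smul, Measure.map_map measurable_fst hg]
    have hfg : (Prod.fst ∘ g) = Prod.map (id : E d → E d)
        (Prod.snd : E d × E d → E d) := by
      funext p; rfl
    rw [hfg, ← Measure.map_prod_map _ _ measurable_id measurable_snd, Measure.map_id,
      ← prod_smul_right, prodM_eq_prod]
  have hγ2 : γ.map Prod.snd = π := by
    rw [hγ_def, map_finset_sum_measure F _ measurable_snd]
    have hterm : ∀ J ∈ F,
        ((μ J)⁻¹ • (((μ.restrict J).prod (π.restrict (Prod.fst ⁻¹' J))).map g)).map Prod.snd
        = π.restrict (Prod.fst ⁻¹' J) := by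
      intro J hJ
      rw [Measure.map_smul, Measure.map_map measurable_snd hg]
      have hsg : (Prod.snd ∘ g) = (Prod.snd : E d × (E d × E d) → E d × E d) := by
        funext p; rfl
      rw [hsg, Measure.map_snd_prod, Measure.restrict_apply_univ, smul_smul]
      rcases eq_or_ne (μ J) 0 with h0 | h0
      · have hz : π.restrict (Prod.fst ⁻¹' J) = 0 :=
          Measure.restrict_eq_zero.2 (by rw [← hμJ J (hFm J hJ), h0])
        rw [hz, smul_zero]
      · rw [ENNReal.inv_mul_cancel h0 (measure_ne_top μ J), one_smul]
    rw [Finset.sum_congr rfl hterm, hsumπ]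
  -- cost bound
  have hc : Measurable fun q : (E d × E d) × (E d × E d) => edistE2 q.1 q.2 := by
    apply ENNReal.measurable_ofReal.comp
    apply Real.continuous_sqrt.measurable.comp
    apply Measurable.add
    · exact ((measurable_fst.fst.dist measurable_snd.fst).pow_const 2)
    · exact ((measurable_fst.snd.dist measurable_snd.snd).pow_const 2)
  have hcost : ∫⁻ p, edistE2 p.1 p.2 ∂γ ≤ ENNReal.ofReal δ := by
    rw [hγ_def, lintegral_finset_sum_measure]
    have hterm : ∀ J ∈ F,
        ∫⁻ p, edistE2 p.1 p.2
          ∂((μ J)⁻¹ • (((μ.restrict J).prod (π.restrict (Prod.fst ⁻¹' J))).map g))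
        ≤ ENNReal.ofReal δ * μ J := by
      intro J hJ
      rw [lintegral_smul_measure, lintegral_map hc hg]
      set P := (μ.restrict J).prod (π.restrict (Prod.fst ⁻¹' J)) with hP
      rcases eq_or_ne (μ J) 0 with h0 | h0
      · have hz : μ.restrict J = 0 := Measure.restrict_eq_zero.2 h0
        rw [hP, hz, Measure.zero_prod]
        simp
      · have hJX : J ⊆ Xcube d := by
          rw [← hFc]; exact subset_sUnion_of_mem hJ
        have hJb : Bornology.IsBounded J := (isBounded_Xcube d).subset hJX
        have hb1 : P {p : E d × (E d × E d) | p.1 ∉ J} = 0 := by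
          have hset : {p : E d × (E d × E d) | p.1 ∉ J} = Jᶜ ×ˢ univ := by
            ext p; simp [mem_prod]
          rw [hset, hP, Measure.prod_prod, Measure.restrict_apply (hFm J hJ).compl]
          simp
        have hb2 : P {p : E d × (E d × E d) | p.2.1 ∉ J} = 0 := by
          have hset : {p : E d × (E d × E d) | p.2.1 ∉ J}
              = univ ×ˢ (Prod.fst ⁻¹' Jᶜ) := by
            ext p; simp [mem_prod]
          rw [hset, hP, Measure.prod_prod,
            Measure.restrict_apply (measurable_fst (hFm J hJ).compl)]
          have : (Prod.fst ⁻¹' Jᶜ : Set (E d × E d)) ∩ Prod.fst ⁻¹' J = ∅ := by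
            ext p; simp
          rw [this]
          simp
        have hae : ∀ᵐ p ∂P, p.1 ∈ J ∧ p.2.1 ∈ J := by
          rw [ae_iff]
          refine measure_mono_null (fun p hp => ?_) (measure_union_null hb1 hb2)
          by_cases h1 : p.1 ∈ J
          · exact Or.inr fun h2 => hp ⟨h1, h2⟩
          · exact Or.inl h1
        have hbound : ∀ᵐ p ∂P, edistE2 (g p).1 (g p).2 ≤ ENNReal.ofReal δ := by
          refine hae.mono fun p hp => ?_
          have h1 : edistE2 (g p).1 (g p).2 = ENNReal.ofReal (dist p.1 p.2.1) := by
            simp only [hg_def, edistE2, dist_self]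
            norm_num
          rw [h1]
          apply ENNReal.ofReal_le_ofReal
          exact le_trans (Metric.dist_le_diam_of_mem hJb hp.1 hp.2) (hdiam J hJ)
        have hint : ∫⁻ p, edistE2 (g p).1 (g p).2 ∂P
            ≤ ENNReal.ofReal δ * (μ J * μ J) := by
          calc ∫⁻ p, edistE2 (g p).1 (g p).2 ∂P
              ≤ ∫⁻ _, ENNReal.ofReal δ ∂P := lintegral_mono_ae hbound
            _ = ENNReal.ofReal δ * P univ := lintegral_const _
            _ = ENNReal.ofReal δ * (μ J * μ J) := by
                rw [hP, ← univ_prod_univ, Measure.prod_prod, Measure.restrict_apply_univ,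
                  Measure.restrict_apply_univ, ← hμJ J (hFm J hJ)]
        calc (μ J)⁻¹ * ∫⁻ p, edistE2 (g p).1 (g p).2 ∂P
            ≤ (μ J)⁻¹ * (ENNReal.ofReal δ * (μ J * μ J)) := mul_le_mul_right hint _
          _ = ENNReal.ofReal δ * (((μ J)⁻¹ * μ J) * μ J) := by ring
          _ = ENNReal.ofReal δ * μ J := by
              rw [ENNReal.inv_mul_cancel h0 (measure_ne_top μ J), one_mul]
    calc ∑ J ∈ F, ∫⁻ p, edistE2 p.1 p.2
          ∂((μ J)⁻¹ • (((μ.restrict J).prod (π.restrict (Prod.fst ⁻¹' J))).map g))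
        ≤ ∑ J ∈ F, ENNReal.ofReal δ * μ J := Finset.sum_le_sum hterm
      _ = ENNReal.ofReal δ * ∑ J ∈ F, μ J := by rw [Finset.mul_sum]
      _ = ENNReal.ofReal δ := by rw [hsumμJ, mul_one]
  exact le_trans (iInf_le_of_le γ (iInf_le_of_le hγ1 (iInf_le_of_le hγ2 le_rfl))) hcost
end
end
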